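/- arXiv:0809.1789 — 7 statements merged into one kernel-verified Lean document; each statement's English description precedes it below -/
import Mathlib

section
/- Let X be a real Banach space and C ≥ 1. Suppose that for every finite set T₁,…,Tₙ of surjective linear isometries of X there exists an inner product (·|·)* on X, invariant under each Tᵢ (i.e. (Tᵢx|Tᵢy)* = (x|y)* for all x,y), satisfying C⁻²‖x‖² ≤ (x|x)* ≤ C²‖x‖² for all x ∈ X. Then there exists an inner product (·|·) on X invariant under the full group of surjective linear isometries of X and satisfying C⁻²‖x‖² ≤ (x|x) ≤ C²‖x‖² for all x ∈ X. -/
/-- `B` is a symmetric bilinear form on the real vector space `X`. -/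
def IsSymmBilin {X : Type*} [AddCommGroup X] [Module ℝ X] (B : X → X → ℝ) : Prop :=
  (∀ x y z : X, B (x + y) z = B x z + B y z) ∧
  (∀ (a : ℝ) (x y : X), B (a • x) y = a * B x y) ∧
  (∀ x y : X, B x y = B y x)

lemma symmBilin_cauchy_schwarz {X : Type*} [AddCommGroup X] [Module ℝ X] {B : X → X → ℝ}
    (hB : IsSymmBilin B) (hpos : ∀ x, 0 ≤ B x x) (x y : X) :
    B x y ^ 2 ≤ B x x * B y y := by
  obtain ⟨hadd, hsmul, hsymm⟩ := hB
  have expand : ∀ t : ℝ, 0 ≤ B y y * t ^ 2 + (2 * B x y) * t + B x x := by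
    intro t
    have h1 : B (x + t • y) (x + t • y)
        = B x x + t * B y x + (B x y + t * B y y) * t := by
      rw [hadd x (t • y) (x + t • y), hsmul, hsymm x (x + t • y), hadd, hsmul,
        hsymm y (x + t • y), hadd, hsmul]
      ring
    have h2 := hpos (x + t • y)
    rw [h1, hsymm y x] at h2
    nlinarith [h2]
  have expand' : ∀ t : ℝ, 0 ≤ B y y * (t * t) + (2 * B x y) * t + B x x := by
    intro t; have := expand t; nlinarith [this]
  have hd := discrim_le_zero expand'
  rw [discrim] at hd
  nlinarith [hd]

theorem stmt0 {X : Type*} [NormedAddCommGroup X] [NormedSpace ℝ X] [CompleteSpace X]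
    {C : ℝ} (hC : 1 ≤ C)
    (h : ∀ (n : ℕ) (T : Fin n → (X ≃ₗᵢ[ℝ] X)), ∃ B : X → X → ℝ,
      IsSymmBilin B ∧
      (∀ (i : Fin n) (x y : X), B (T i x) (T i y) = B x y) ∧
      (∀ x : X, (C ^ 2)⁻¹ * ‖x‖ ^ 2 ≤ B x x ∧ B x x ≤ C ^ 2 * ‖x‖ ^ 2)) :
    ∃ B : X → X → ℝ,
      IsSymmBilin B ∧
      (∀ (T : X ≃ₗᵢ[ℝ] X) (x y : X), B (T x) (T y) = B x y) ∧
      (∀ x : X, (C ^ 2)⁻¹ * ‖x‖ ^ 2 ≤ B x x ∧ B x x ≤ C ^ 2 * ‖x‖ ^ 2) := by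
  classical
  have hC0 : (0:ℝ) < C := lt_of_lt_of_le one_pos hC
  -- Step 1: for each finite set of isometries get an invariant form.
  have key : ∀ S : Finset (X ≃ₗᵢ[ℝ] X), ∃ B : X → X → ℝ,
      IsSymmBilin B ∧ (∀ T ∈ S, ∀ x y : X, B (T x) (T y) = B x y) ∧
      (∀ x : X, (C ^ 2)⁻¹ * ‖x‖ ^ 2 ≤ B x x ∧ B x x ≤ C ^ 2 * ‖x‖ ^ 2) := by
    intro S
    obtain ⟨B, h1, h2, h3⟩ := h S.card (fun i => ((S.equivFin.symm i : S) : X ≃ₗᵢ[ℝ] X))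
    refine ⟨B, h1, ?_, h3⟩
    intro T hT x y
    have := h2 (S.equivFin ⟨T, hT⟩) x y
    simpa using this
  choose Bf hsymm hinv hbound using key
  -- Step 2: an ultrafilter refining the `atTop` filter on finite subsets.
  have : (Filter.atTop : Filter (Finset (X ≃ₗᵢ[ℝ] X))).NeBot := Filter.atTop_neBot
  set U : Ultrafilter (Finset (X ≃ₗᵢ[ℝ] X)) := Ultrafilter.of Filter.atTop with hUdef
  have hUle : (U : Filter (Finset (X ≃ₗᵢ[ℝ] X))) ≤ Filter.atTop := Ultrafilter.of_le _
  -- boundedness of the family pointwise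
  have hpos : ∀ S (x : X), 0 ≤ Bf S x x := by
    intro S x
    have := (hbound S x).1
    have : (0:ℝ) ≤ (C ^ 2)⁻¹ * ‖x‖ ^ 2 := by positivity
    linarith [(hbound S x).1]
  have habs : ∀ S (x y : X), |Bf S x y| ≤ C ^ 2 * ‖x‖ * ‖y‖ := by
    intro S x y
    have hcs := symmBilin_cauchy_schwarz (hsymm S) (hpos S) x y
    have h1 := (hbound S x).2
    have h2 := (hbound S y).2
    have hM : (0:ℝ) ≤ C ^ 2 * ‖x‖ * ‖y‖ := by positivity
    have hsq : Bf S x y ^ 2 ≤ (C ^ 2 * ‖x‖ * ‖y‖) ^ 2 := by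
      calc Bf S x y ^ 2 ≤ Bf S x x * Bf S y y := hcs
        _ ≤ (C ^ 2 * ‖x‖ ^ 2) * (C ^ 2 * ‖y‖ ^ 2) := by
            have := hpos S x
            have := hpos S y
            nlinarith [h1, h2, hpos S x, hpos S y]
        _ = (C ^ 2 * ‖x‖ * ‖y‖) ^ 2 := by ring
    exact abs_le.2 ⟨by nlinarith, by nlinarith⟩
  -- Step 3: pointwise limits along the ultrafilter.
  have hlim : ∀ x y : X, ∃ c : ℝ, Filter.Tendsto (fun S => Bf S x y) U (nhds c) := by
    intro x y
    have hcomp : IsCompact (Set.Icc (-(C ^ 2 * ‖x‖ * ‖y‖)) (C ^ 2 * ‖x‖ * ‖y‖)) :=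
      isCompact_Icc
    have hmem : (↑(U.map (fun S => Bf S x y)) : Filter ℝ)
        ≤ Filter.principal (Set.Icc (-(C ^ 2 * ‖x‖ * ‖y‖)) (C ^ 2 * ‖x‖ * ‖y‖)) := by
      rw [Filter.le_principal_iff, Ultrafilter.coe_map, Filter.mem_map]
      have : ∀ S, Bf S x y ∈ Set.Icc (-(C ^ 2 * ‖x‖ * ‖y‖)) (C ^ 2 * ‖x‖ * ‖y‖) := by
        intro S
        have := habs S x y
        rw [Set.mem_Icc]
        constructor <;> [linarith [neg_abs_le (Bf S x y)]; linarith [le_abs_self (Bf S x y)]]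
      exact Filter.univ_mem' this
    obtain ⟨c, _, hc⟩ := hcomp.ultrafilter_le_nhds (U.map (fun S => Bf S x y)) hmem
    exact ⟨c, hc⟩
  choose L hL using hlim
  have hNeBot : (U : Filter (Finset (X ≃ₗᵢ[ℝ] X))).NeBot := U.neBot
  refine ⟨L, ⟨?_, ?_, ?_⟩, ?_, ?_⟩
  · intro x y z
    have t1 : Filter.Tendsto (fun S => Bf S (x + y) z) U (nhds (L x z + L y z)) := by
      have : (fun S => Bf S (x + y) z) = fun S => Bf S x z + Bf S y z := by
        funext S; exact (hsymm S).1 x y z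
      rw [this]
      exact (hL x z).add (hL y z)
    exact tendsto_nhds_unique (hL (x + y) z) t1
  · intro a x y
    have t1 : Filter.Tendsto (fun S => Bf S (a • x) y) U (nhds (a * L x y)) := by
      have : (fun S => Bf S (a • x) y) = fun S => a * Bf S x y := by
        funext S; exact (hsymm S).2.1 a x y
      rw [this]
      exact (hL x y).const_mul a
    exact tendsto_nhds_unique (hL (a • x) y) t1
  · intro x y
    have t1 : Filter.Tendsto (fun S => Bf S x y) U (nhds (L y x)) := by
      have : (fun S => Bf S x y) = fun S => Bf S y x := by
        funext S; exact (hsymm S).2.2 x y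
      rw [this]
      exact hL y x
    exact tendsto_nhds_unique (hL x y) t1
  · intro T x y
    have hmem : {S : Finset (X ≃ₗᵢ[ℝ] X) | T ∈ S} ∈ (U : Filter _) := by
      have h0 : {S : Finset (X ≃ₗᵢ[ℝ] X) | ({T} : Finset _) ≤ S} ∈ (Filter.atTop : Filter _) :=
        Filter.mem_atTop _
      exact Filter.mem_of_superset (hUle h0) fun S hS => Finset.singleton_subset_iff.mp hS
    have heq : (fun S => Bf S (T x) (T y)) =ᶠ[(U : Filter _)] fun S => Bf S x y :=
      Filter.eventually_of_mem hmem fun S hS => hinv S T hS x y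
    have t1 : Filter.Tendsto (fun S => Bf S (T x) (T y)) U (nhds (L x y)) :=
      (hL x y).congr' heq.symm
    exact tendsto_nhds_unique (hL (T x) (T y)) t1
  · intro x
    constructor
    · exact ge_of_tendsto (hL x x) (Filter.Eventually.of_forall fun S => (hbound S x).1)
    · exact le_of_tendsto (hL x x) (Filter.Eventually.of_forall fun S => (hbound S x).2)
end

section
/- Let X be a reflexive real Banach space and let M be a downward-directed family of closed subspaces of X (directed by reverse inclusion) with ⋂_{E ∈ M} E = {0}. Then for every x ∈ X, sup_{E ∈ M} dist(x, E) = ‖x‖. -/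
/-- Hahn–Banach separation of a point from a closed subspace, via the quotient norm. -/
lemma exists_dual_of_not_mem {X : Type*} [NormedAddCommGroup X] [NormedSpace ℝ X]
    (E : Submodule ℝ X) (hE : IsClosed (E : Set X)) {z : X} (hz : z ∉ E) :
    ∃ f : X →L[ℝ] ℝ, (∀ y ∈ E, f y = 0) ∧ f z ≠ 0 := by
  haveI : IsClosed (E : Set X) := hE
  let π : X →L[ℝ] X ⧸ E :=
    LinearMap.mkContinuous E.mkQ 1 (fun m => by
      simpa using Submodule.Quotient.norm_mk_le E m)
  have hπz : π z ≠ 0 := by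
    simpa [π, Submodule.Quotient.mk_eq_zero] using hz
  obtain ⟨g, hg1, hgz⟩ := exists_dual_vector ℝ (π z) (norm_ne_zero_iff.2 hπz)
  refine ⟨g.comp π, fun y hy => ?_, ?_⟩
  · have h0 : π y = 0 := (Submodule.Quotient.mk_eq_zero E).2 hy
    simp [ContinuousLinearMap.comp_apply, h0]
  · have : g (π z) = ‖π z‖ := hgz
    simp only [ContinuousLinearMap.comp_apply, this]
    exact_mod_cast norm_ne_zero_iff.2 hπz

theorem stmt4 {X : Type*} [NormedAddCommGroup X] [NormedSpace ℝ X] [CompleteSpace X]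
    (hrefl : Function.Surjective (NormedSpace.inclusionInDoubleDual ℝ X))
    (M : Set (Submodule ℝ X))
    (hclosed : ∀ E ∈ M, IsClosed (E : Set X))
    (hdir : ∀ E₁ ∈ M, ∀ E₂ ∈ M, ∃ E ∈ M, E ≤ E₁ ⊓ E₂)
    (hinter : (⋂ E ∈ M, (E : Set X)) = {0}) :
    ∀ x : X, (⨆ E : M, Metric.infDist x ((E : Submodule ℝ X) : Set X)) = ‖x‖ := by
  intro x
  rcases M.eq_empty_or_nonempty with hM | hM
  · -- empty family: X is trivial
    subst hM
    have hx : x = 0 := by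
      have hx' : x ∈ (⋂ E ∈ (∅ : Set (Submodule ℝ X)), (E : Set X)) := by simp
      rw [hinter] at hx'
      simpa using hx'
    haveI : IsEmpty ↥(∅ : Set (Submodule ℝ X)) := by
      simp only [Set.isEmpty_coe_sort]
    rw [Real.iSup_of_isEmpty]
    simp [hx]
  obtain ⟨E₀, hE₀⟩ := hM
  haveI : Nonempty ↥M := ⟨⟨E₀, hE₀⟩⟩
  -- upper bound: each infDist ≤ ‖x‖
  have hle : ∀ E : M, Metric.infDist x ((E : Submodule ℝ X) : Set X) ≤ ‖x‖ := by
    intro E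
    have := Metric.infDist_le_dist_of_mem
      (x := x) (s := ((E : Submodule ℝ X) : Set X)) (Submodule.zero_mem _)
    simpa using this
  have bdd : BddAbove (Set.range fun E : M => Metric.infDist x ((E : Submodule ℝ X) : Set X)) := by
    refine ⟨‖x‖, ?_⟩
    rintro _ ⟨E, rfl⟩
    exact hle E
  set s := ⨆ E : M, Metric.infDist x ((E : Submodule ℝ X) : Set X) with hs_def
  have hs_le : s ≤ ‖x‖ := ciSup_le hle
  have hs_nonneg : 0 ≤ s := by
    refine le_trans Metric.infDist_nonneg (le_ciSup bdd (⟨E₀, hE₀⟩ : M))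
  -- the union of annihilators is a submodule of the dual
  let S : Submodule ℝ (X →L[ℝ] ℝ) :=
    { carrier := {f | ∃ E ∈ M, ∀ y ∈ E, f y = 0}
      zero_mem' := ⟨E₀, hE₀, fun y _ => rfl⟩
      add_mem' := by
        rintro f g ⟨E₁, hE₁, hf⟩ ⟨E₂, hE₂, hg⟩
        obtain ⟨E, hE, hle'⟩ := hdir E₁ hE₁ E₂ hE₂
        refine ⟨E, hE, fun y hy => ?_⟩
        have h1 : y ∈ E₁ := (hle'.trans inf_le_left) hy
        have h2 : y ∈ E₂ := (hle'.trans inf_le_right) hy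
        simp [hf y h1, hg y h2]
      smul_mem' := by
        rintro c f ⟨E, hE, hf⟩
        exact ⟨E, hE, fun y hy => by simp [hf y hy]⟩ }
  -- density of S in the dual, via reflexivity
  have hdense : S.topologicalClosure = ⊤ := by
    by_contra hne
    obtain ⟨g, hg⟩ : ∃ g, g ∉ S.topologicalClosure := by
      by_contra h
      push_neg at h
      exact hne (Submodule.eq_top_iff'.2 h)
    obtain ⟨Φ, hΦ0, hΦg⟩ := exists_dual_of_not_mem S.topologicalClosure
      S.isClosed_topologicalClosure hg
    obtain ⟨z, hz⟩ := hrefl Φ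
    have hzmem : ∀ E ∈ M, z ∈ E := by
      intro E hE
      by_contra hzE
      obtain ⟨f, hfE, hfz⟩ := exists_dual_of_not_mem E (hclosed E hE) hzE
      have hfS : f ∈ S.topologicalClosure :=
        Submodule.le_topologicalClosure S ⟨E, hE, hfE⟩
      have h0 : Φ f = 0 := hΦ0 f hfS
      rw [← hz] at h0
      exact hfz h0
    have hz0 : z ∈ (⋂ E ∈ M, (E : Set X)) := Set.mem_iInter₂.2 hzmem
    rw [hinter] at hz0
    have hz0' : z = 0 := hz0
    apply hΦg
    rw [← hz, hz0']
    simp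
  -- conclude: ‖x‖ ≤ s
  refine le_antisymm (ciSup_le hle) ?_
  by_cases hx0 : x = 0
  · simpa [hx0] using hs_nonneg
  refine le_of_forall_pos_le_add ?_
  intro ε hε
  obtain ⟨f₀, hf₀n, hf₀x⟩ := exists_dual_vector ℝ x (norm_ne_zero_iff.2 hx0)
  set δ : ℝ := ε / (2 * (‖x‖ + 1)) with hδ_def
  have hδ : 0 < δ := div_pos hε (by positivity)
  have hf₀mem : f₀ ∈ closure (S : Set (X →L[ℝ] ℝ)) := by
    have : (S.topologicalClosure : Set (X →L[ℝ] ℝ)) = Set.univ := by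
      rw [hdense]; rfl
    have h2 : f₀ ∈ (S.topologicalClosure : Set (X →L[ℝ] ℝ)) := by
      rw [this]; trivial
    exact h2
  obtain ⟨g, hgS, hgd⟩ := Metric.mem_closure_iff.1 hf₀mem δ hδ
  obtain ⟨E, hEM, hgE⟩ := hgS
  have hdist : ‖f₀ - g‖ < δ := by rwa [← dist_eq_norm]
  -- g x ≤ (1 + δ) * s
  have hgx : g x ≤ (1 + δ) * s := by
    have hg_infDist : g x ≤ (1 + δ) * Metric.infDist x (E : Set X) := by
      have hEne : (E : Set X).Nonempty := ⟨0, Submodule.zero_mem _⟩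
      have key : (1 + δ)⁻¹ * g x ≤ Metric.infDist x (E : Set X) := by
        haveI : Nonempty ↥(E : Set X) := hEne.to_subtype
        rw [Metric.infDist_eq_iInf]
        refine le_ciInf ?_
        rintro ⟨y, hy⟩
        show (1 + δ)⁻¹ * g x ≤ dist x y
        have hval : g x = g (x - y) := by
          rw [map_sub, hgE y hy, sub_zero]
        have hbound : g (x - y) ≤ ‖g‖ * ‖x - y‖ :=
          le_trans (le_abs_self _) (g.le_opNorm (x - y))
        have hgn : ‖g‖ ≤ 1 + δ := by
          calc ‖g‖ = ‖f₀ - (f₀ - g)‖ := by rw [sub_sub_cancel]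
            _ ≤ ‖f₀‖ + ‖f₀ - g‖ := norm_sub_le _ _
            _ ≤ 1 + δ := by rw [hf₀n]; linarith
        have hxy : 0 ≤ ‖x - y‖ := norm_nonneg _
        rw [dist_eq_norm]
        rw [inv_mul_le_iff₀ (by positivity)]
        have : g x ≤ (1 + δ) * ‖x - y‖ := by nlinarith
        linarith
      have hinf_le_s : Metric.infDist x (E : Set X) ≤ s :=
        le_ciSup bdd (⟨E, hEM⟩ : M)
      have h1δ : (0:ℝ) < 1 + δ := by linarith
      calc g x = (1 + δ) * ((1 + δ)⁻¹ * g x) := by field_simp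
        _ ≤ (1 + δ) * Metric.infDist x (E : Set X) := by
            exact mul_le_mul_of_nonneg_left key h1δ.le
    have hinf_le_s : Metric.infDist x (E : Set X) ≤ s := le_ciSup bdd (⟨E, hEM⟩ : M)
    calc g x ≤ (1 + δ) * Metric.infDist x (E : Set X) := hg_infDist
      _ ≤ (1 + δ) * s := by nlinarith
  -- ‖x‖ = f₀ x = g x + (f₀ - g) x ≤ (1+δ)s + δ‖x‖
  have hmain : ‖x‖ ≤ (1 + δ) * s + δ * ‖x‖ := by
    have h1 : (f₀ - g) x ≤ ‖f₀ - g‖ * ‖x‖ :=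
      le_trans (le_abs_self _) ((f₀ - g).le_opNorm x)
    have h2 : ‖f₀ - g‖ * ‖x‖ ≤ δ * ‖x‖ := by
      have := norm_nonneg x
      nlinarith
    have hfx : f₀ x = ‖x‖ := by exact_mod_cast hf₀x
    have h3 : ‖x‖ = g x + (f₀ - g) x := by
      rw [← hfx]
      simp [ContinuousLinearMap.sub_apply]
    linarith
  -- arithmetic: δ * (2 * (‖x‖ + 1)) = ε
  have hδε : δ * (2 * (‖x‖ + 1)) = ε := by
    rw [hδ_def]
    field_simp
  have hxn : (0:ℝ) ≤ ‖x‖ := norm_nonneg x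
  nlinarith [mul_le_mul_of_nonneg_left hs_le hδ.le]
end

section
/- Let (X, ‖·‖) be a real Banach space, H an inner product space, G ⊆ G(X) a subgroup satisfying property (∗), and S : X → H a bounded linear isomorphism with bounded inverse. Then there exists an inner product (·|·)_X on X such that ‖S⁻¹‖⁻²‖x‖² ≤ (x|x)_X ≤ ‖S‖²‖x‖² for all x ∈ X, and (Tx|Ty)_X = (x|y)_X for all x, y ∈ X and all T in the strong-operator closure of G. -/
open MeasureTheory Metric Set

section Forms
variable {X : Type*} [NormedAddCommGroup X] [NormedSpace ℝ X]

lemma form_neg {B : X → X → ℝ}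
    (hsmul : ∀ (a : ℝ) (x y : X), B (a • x) y = a * B x y) (x y : X) :
    B (-x) y = -B x y := by
  have := hsmul (-1) x y
  simpa using this

lemma form_sub {B : X → X → ℝ}
    (hadd : ∀ x y z : X, B (x + y) z = B x z + B y z)
    (hsmul : ∀ (a : ℝ) (x y : X), B (a • x) y = a * B x y) (x y z : X) :
    B (x - y) z = B x z - B y z := by
  have h := hadd (x - y) y z
  rw [sub_add_cancel] at h
  linarith

lemma form_cs {B : X → X → ℝ}
    (hadd : ∀ x y z : X, B (x + y) z = B x z + B y z)
    (hsmul : ∀ (a : ℝ) (x y : X), B (a • x) y = a * B x y)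
    (hsymm : ∀ x y : X, B x y = B y x)
    (h0 : ∀ x : X, 0 ≤ B x x) (x y : X) :
    (B x y) ^ 2 ≤ B x x * B y y := by
  have expand : ∀ t : ℝ, 0 ≤ B x x * (t * t) + (2 * B x y) * t + B y y := by
    intro t
    have h1 : B (t • x + y) (t • x + y)
        = t * (t * B x x) + t * B x y + (t * B x y + B y y) := by
      rw [hadd, hsymm (t • x) (t • x + y), hadd, hsymm y (t • x + y), hadd,
        hsmul, hsmul, hsymm x (t • x), hsmul, hsymm y (t • x), hsmul]
    have h2 := h0 (t • x + y)
    rw [h1] at h2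
    nlinarith [h2]
  have hd := discrim_le_zero expand
  unfold discrim at hd
  nlinarith [hd]

lemma form_abs_le {B : X → X → ℝ} {C : ℝ} (hC : 0 ≤ C)
    (hadd : ∀ x y z : X, B (x + y) z = B x z + B y z)
    (hsmul : ∀ (a : ℝ) (x y : X), B (a • x) y = a * B x y)
    (hsymm : ∀ x y : X, B x y = B y x)
    (h0 : ∀ x : X, 0 ≤ B x x)
    (hup : ∀ x : X, B x x ≤ C * ‖x‖ ^ 2) (x y : X) :
    |B x y| ≤ C * ‖x‖ * ‖y‖ := by
  have hcs := form_cs hadd hsmul hsymm h0 x y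
  have h1 : B x x * B y y ≤ (C * ‖x‖ ^ 2) * (C * ‖y‖ ^ 2) := by
    have := h0 x; have := h0 y; have := hup x; have := hup y
    nlinarith
  have h2 : (B x y) ^ 2 ≤ (C * ‖x‖ * ‖y‖) ^ 2 := by nlinarith
  have h3 : 0 ≤ C * ‖x‖ * ‖y‖ := by positivity
  nlinarith [abs_nonneg (B x y), sq_abs (B x y), le_abs_self (B x y), neg_abs_le (B x y)]

end Forms


section Iso
variable (V : Type*) [NormedAddCommGroup V] [NormedSpace ℝ V]

/-- The group of isometric invertible continuous linear maps on `V`. -/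
def isoGroup : Subgroup (V →L[ℝ] V)ˣ where
  carrier := {u | ∀ v : V, ‖(u : V →L[ℝ] V) v‖ = ‖v‖}
  one_mem' := by intro v; simp
  mul_mem' := by
    intro a b ha hb v
    have : ((a * b : (V →L[ℝ] V)ˣ) : V →L[ℝ] V) v = (a : V →L[ℝ] V) ((b : V →L[ℝ] V) v) := rfl
    rw [this, ha, hb]
  inv_mem' := by
    intro u hu v
    have h1 : (u : V →L[ℝ] V) (((u⁻¹ : (V →L[ℝ] V)ˣ) : V →L[ℝ] V) v) = v := by
      have : ((u * u⁻¹ : (V →L[ℝ] V)ˣ) : V →L[ℝ] V) v = v := by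
        rw [mul_inv_cancel]; rfl
      exact this
    have := hu (((u⁻¹ : (V →L[ℝ] V)ˣ) : V →L[ℝ] V) v)
    rw [h1] at this
    exact this.symm

variable {V}

lemma isoGroup_compact [FiniteDimensional ℝ V] :
    IsCompact ((isoGroup V : Subgroup (V →L[ℝ] V)ˣ) : Set (V →L[ℝ] V)ˣ) := by
  set M := V →L[ℝ] V
  have hemb := Units.isEmbedding_embedProduct (M := M)
  rw [hemb.isCompact_iff]
  set E : Set (M × Mᵐᵒᵖ) :=
    {p | p.1 * (MulOpposite.unop p.2) = 1 ∧ (MulOpposite.unop p.2) * p.1 = 1 ∧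
      (∀ v : V, ‖p.1 v‖ = ‖v‖) ∧ (∀ v : V, ‖(MulOpposite.unop p.2) v‖ = ‖v‖)} with hE
  have himg : Units.embedProduct M '' ((isoGroup V : Subgroup Mˣ) : Set Mˣ) = E := by
    ext p
    constructor
    · rintro ⟨u, hu, rfl⟩
      refine ⟨?_, ?_, ?_, ?_⟩
      · simpa using u.mul_inv
      · simpa using u.inv_mul
      · exact hu
      · exact (isoGroup V).inv_mem hu
    · rintro ⟨h1, h2, h3, h4⟩
      refine ⟨⟨p.1, MulOpposite.unop p.2, h1, h2⟩, h3, ?_⟩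
      simp [Units.embedProduct]
  rw [himg]
  -- E is a closed subset of a compact set
  have cfst : Continuous fun p : M × Mᵐᵒᵖ => p.1 := continuous_fst
  have csnd : Continuous fun p : M × Mᵐᵒᵖ => MulOpposite.unop p.2 :=
    MulOpposite.continuous_unop.comp continuous_snd
  have capp : ∀ (f : M × Mᵐᵒᵖ → M), Continuous f → ∀ v : V,
      Continuous fun p => (f p) v := by
    intro f hf v
    exact (ContinuousLinearMap.apply ℝ V v).continuous.comp hf
  have hclosed : IsClosed E := by
    rw [hE]
    refine IsClosed.inter (isClosed_eq (cfst.mul csnd) continuous_const) ?_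
    refine IsClosed.inter (isClosed_eq (csnd.mul cfst) continuous_const) ?_
    refine IsClosed.inter ?_ ?_
    · have : {p : M × Mᵐᵒᵖ | ∀ v : V, ‖p.1 v‖ = ‖v‖}
          = ⋂ v : V, {p : M × Mᵐᵒᵖ | ‖p.1 v‖ = ‖v‖} := by
        ext p; simp [Set.mem_iInter]
      rw [show (fun p : M × Mᵐᵒᵖ => ∀ v : V, ‖p.1 v‖ = ‖v‖)
          = {p : M × Mᵐᵒᵖ | ∀ v : V, ‖p.1 v‖ = ‖v‖} from rfl, this]
      exact isClosed_iInter fun v =>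
        isClosed_eq (continuous_norm.comp (capp _ cfst v)) continuous_const
    · have : {p : M × Mᵐᵒᵖ | ∀ v : V, ‖(MulOpposite.unop p.2) v‖ = ‖v‖}
          = ⋂ v : V, {p : M × Mᵐᵒᵖ | ‖(MulOpposite.unop p.2) v‖ = ‖v‖} := by
        ext p; simp [Set.mem_iInter]
      rw [show (fun p : M × Mᵐᵒᵖ => ∀ v : V, ‖(MulOpposite.unop p.2) v‖ = ‖v‖)
          = {p : M × Mᵐᵒᵖ | ∀ v : V, ‖(MulOpposite.unop p.2) v‖ = ‖v‖} from rfl, this]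
      exact isClosed_iInter fun v =>
        isClosed_eq (continuous_norm.comp (capp _ csnd v)) continuous_const
  have hsub : E ⊆ (closedBall (0 : M) 1) ×ˢ (MulOpposite.op '' closedBall (0 : M) 1) := by
    rintro p ⟨h1, h2, h3, h4⟩
    constructor
    · simp only [mem_closedBall, dist_zero_right]
      exact ContinuousLinearMap.opNorm_le_bound _ zero_le_one fun v => by
        rw [h3 v, one_mul]
    · refine ⟨MulOpposite.unop p.2, ?_, rfl⟩
      simp only [mem_closedBall, dist_zero_right]
      exact ContinuousLinearMap.opNorm_le_bound _ zero_le_one fun v => by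
        rw [h4 v, one_mul]
  exact ((isCompact_closedBall (0:M) 1).prod
    ((isCompact_closedBall (0:M) 1).image MulOpposite.continuous_op)).of_isClosed_subset
    hclosed hsub

end Iso

section Avg
open scoped RealInnerProductSpace

variable {V : Type*} [NormedAddCommGroup V] [NormedSpace ℝ V]
variable {H : Type*} [NormedAddCommGroup H] [InnerProductSpace ℝ H]

lemma exists_invariant_form [FiniteDimensional ℝ V]
    (g : V →ₗ[ℝ] H) {c C : ℝ} (hc0 : 0 ≤ c) (hC0 : 0 ≤ C)
    (hc : ∀ v : V, c * ‖v‖ ^ 2 ≤ ‖g v‖ ^ 2) (hC : ∀ v : V, ‖g v‖ ^ 2 ≤ C * ‖v‖ ^ 2) :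
    ∃ b : V → V → ℝ,
      (∀ x y z : V, b (x + y) z = b x z + b y z) ∧
      (∀ (a : ℝ) (x y : V), b (a • x) y = a * b x y) ∧
      (∀ x y : V, b x y = b y x) ∧
      (∀ x : V, c * ‖x‖ ^ 2 ≤ b x x) ∧ (∀ x : V, b x x ≤ C * ‖x‖ ^ 2) ∧
      (∀ u ∈ isoGroup V, ∀ x y : V,
        b (((u : (V →L[ℝ] V)ˣ) : V →L[ℝ] V) x) (((u : (V →L[ℝ] V)ˣ) : V →L[ℝ] V) y) = b x y) := by
  classical
  set Γ := (isoGroup V : Subgroup (V →L[ℝ] V)ˣ)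
  haveI : CompactSpace Γ := isCompact_iff_compactSpace.mp isoGroup_compact
  letI : MeasurableSpace Γ := borel Γ
  haveI : BorelSpace Γ := ⟨rfl⟩
  haveI : Nonempty Γ := ⟨1⟩
  let K₀ : TopologicalSpace.PositiveCompacts Γ :=
    ⟨⟨Set.univ, isCompact_univ⟩, by simpa [interior_univ] using Set.univ_nonempty⟩
  let μ : Measure Γ := MeasureTheory.Measure.haarMeasure K₀
  haveI : IsProbabilityMeasure μ := ⟨by
    have : (K₀ : Set Γ) = Set.univ := rfl
    rw [← this]; exact MeasureTheory.Measure.haarMeasure_self⟩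
  -- evaluation map
  let e : Γ → V →L[ℝ] V := fun γ => ((γ⁻¹ : Γ) : (V →L[ℝ] V)ˣ)
  have he : Continuous e :=
    Units.continuous_val.comp (continuous_subtype_val.comp continuous_inv)
  have hgc : Continuous g := g.continuous_of_finiteDimensional
  have heiso : ∀ (γ : Γ) (v : V), ‖e γ v‖ = ‖v‖ := fun γ v => (γ⁻¹ : Γ).2 v
  let f : V → V → Γ → ℝ := fun x y γ => ⟪g (e γ x), g (e γ y)⟫
  have hfc : ∀ x y, Continuous (f x y) := by
    intro x y
    have h1 : Continuous fun γ => g (e γ x) :=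
      hgc.comp ((ContinuousLinearMap.apply ℝ V x).continuous.comp he)
    have h2 : Continuous fun γ => g (e γ y) :=
      hgc.comp ((ContinuousLinearMap.apply ℝ V y).continuous.comp he)
    exact h1.inner h2
  have hint : ∀ x y, Integrable (f x y) μ := fun x y =>
    (hfc x y).integrable_of_hasCompactSupport (HasCompactSupport.of_compactSpace _)
  refine ⟨fun x y => ∫ γ, f x y γ ∂μ, ?_, ?_, ?_, ?_, ?_, ?_⟩
  · intro x y z
    rw [← integral_add (hint x z) (hint y z)]
    refine integral_congr_ae (Filter.Eventually.of_forall fun γ => ?_)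
    simp only [f, map_add, inner_add_left]
  · intro a x y
    rw [← integral_const_mul]
    refine integral_congr_ae (Filter.Eventually.of_forall fun γ => ?_)
    show inner ℝ (g ((e γ) (a • x))) (g ((e γ) y)) = a * inner ℝ (g ((e γ) x)) (g ((e γ) y))
    rw [show (e γ) (a • x) = a • (e γ) x from (e γ).map_smul a x,
      g.map_smul a ((e γ) x), real_inner_smul_left]
  · intro x y
    refine integral_congr_ae (Filter.Eventually.of_forall fun γ => ?_)
    exact real_inner_comm _ _
  · intro x
    have hpt : ∀ γ : Γ, c * ‖x‖ ^ 2 ≤ f x x γ := by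
      intro γ
      have : f x x γ = ‖g (e γ x)‖ ^ 2 := real_inner_self_eq_norm_sq _
      rw [this, ← heiso γ x]
      exact hc _
    calc c * ‖x‖ ^ 2 = ∫ _ : Γ, c * ‖x‖ ^ 2 ∂μ := by
          rw [integral_const]; simp
      _ ≤ ∫ γ, f x x γ ∂μ := integral_mono (integrable_const _) (hint x x) hpt
  · intro x
    have hpt : ∀ γ : Γ, f x x γ ≤ C * ‖x‖ ^ 2 := by
      intro γ
      have : f x x γ = ‖g (e γ x)‖ ^ 2 := real_inner_self_eq_norm_sq _
      rw [this, ← heiso γ x]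
      exact hC _
    calc (∫ γ, f x x γ ∂μ) ≤ ∫ _ : Γ, C * ‖x‖ ^ 2 ∂μ :=
          integral_mono (hint x x) (integrable_const _) hpt
      _ = C * ‖x‖ ^ 2 := by rw [integral_const]; simp
  · intro u hu x y
    have hbu : (u : (V →L[ℝ] V)ˣ) ∈ Γ := hu
    set ub : Γ := (⟨u, hbu⟩ : Γ) with hub
    have key : ∀ γ : Γ,
        f (((u : (V →L[ℝ] V)ˣ) : V →L[ℝ] V) x) (((u : (V →L[ℝ] V)ˣ) : V →L[ℝ] V) y) γ
          = f x y (ub⁻¹ * γ) := by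
      intro γ
      have h1 : ∀ v : V, e γ (((u : (V →L[ℝ] V)ˣ) : V →L[ℝ] V) v) = e (ub⁻¹ * γ) v := by
        intro v
        show ((γ⁻¹ : Γ) : (V →L[ℝ] V)ˣ).val (((ub : Γ) : (V →L[ℝ] V)ˣ).val v)
          = (((ub⁻¹ * γ)⁻¹ : Γ) : (V →L[ℝ] V)ˣ).val v
        rw [mul_inv_rev, inv_inv]
        rfl
      simp only [f, h1]
    calc (∫ γ, f (((u : (V →L[ℝ] V)ˣ) : V →L[ℝ] V) x)
            (((u : (V →L[ℝ] V)ˣ) : V →L[ℝ] V) y) γ ∂μ)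
        = ∫ γ, f x y (ub⁻¹ * γ) ∂μ := integral_congr_ae (Filter.Eventually.of_forall fun γ => key γ)
      _ = ∫ γ, f x y γ ∂μ := integral_mul_left_eq_self (f x y) ub⁻¹

end Avg


/-- Property (∗). -/
def PropStar {X : Type*} [NormedAddCommGroup X] [NormedSpace ℝ X]
    (G : Subgroup (X ≃ₗᵢ[ℝ] X)) : Prop :=
  ∀ (n : ℕ) (T : Fin n → (X ≃ₗᵢ[ℝ] X)), (∀ i, T i ∈ G) →
    ∀ Z : Submodule ℝ X, IsClosed (Z : Set X) → FiniteDimensional ℝ (X ⧸ Z) →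
      ∃ Y : Submodule ℝ X, IsClosed (Y : Set X) ∧ FiniteDimensional ℝ (X ⧸ Y) ∧ Y ≤ Z ∧
        ∀ i, Submodule.map ((T i).toLinearEquiv : X →ₗ[ℝ] X) Y = Y

section Stage
variable {X : Type*} [NormedAddCommGroup X] [NormedSpace ℝ X] [CompleteSpace X]
variable {H : Type*} [NormedAddCommGroup H] [InnerProductSpace ℝ H]

set_option maxHeartbeats 2000000 in
lemma stage_lemma (G : Subgroup (X ≃ₗᵢ[ℝ] X)) (hstar : PropStar G) (S : X ≃L[ℝ] H)
    (F : Finset (X ≃ₗᵢ[ℝ] X)) (hF : ∀ g ∈ F, g ∈ G) (s : Finset X) :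
    ∃ B : X → X → ℝ,
      (∀ x y z : X, B (x + y) z = B x z + B y z) ∧
      (∀ (a : ℝ) (x y : X), B (a • x) y = a * B x y) ∧
      (∀ x y : X, B x y = B y x) ∧
      (∀ x : X, B x x ≤ ‖(S : X →L[ℝ] H)‖ ^ 2 * ‖x‖ ^ 2) ∧
      (∀ x ∈ s, ‖(S.symm : H →L[ℝ] X)‖⁻¹ ^ 2 * ‖x‖ ^ 2 ≤ B x x) ∧
      (∀ x : X, 0 ≤ B x x) ∧
      (∀ T ∈ F, ∀ x y : X, B (T x) (T y) = B x y) := by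
  classical
  haveI : CompleteSpace H :=
    (completeSpace_congr (e := S.toLinearEquiv.toEquiv) S.isUniformEmbedding).1 ‹_›
  -- norming functionals
  have hfx : ∀ x : X, ∃ φ : X →L[ℝ] ℝ, ‖φ‖ ≤ 1 ∧ φ x = ‖x‖ := fun x =>
    exists_dual_vector'' ℝ x
  choose φ hφ1 hφ2 using hfx
  set Φ : X →L[ℝ] (s → ℝ) := ContinuousLinearMap.pi (fun i : s => φ i) with hΦ
  set Z : Submodule ℝ X := LinearMap.ker (Φ : X →ₗ[ℝ] (s → ℝ)) with hZ
  have hZc : IsClosed (Z : Set X) := ContinuousLinearMap.isClosed_ker Φ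
  haveI : FiniteDimensional ℝ (X ⧸ Z) := by
    have e := (Φ : X →ₗ[ℝ] (s → ℝ)).quotKerEquivRange
    haveI : FiniteDimensional ℝ (LinearMap.range (Φ : X →ₗ[ℝ] (s → ℝ))) :=
      FiniteDimensional.finiteDimensional_submodule _
    exact Module.Finite.equiv e.symm
  -- invariant subspace
  obtain ⟨Y, hYc, hYfd, hYZ, hYmap⟩ := hstar F.card (fun i => (F.equivFin.symm i : X ≃ₗᵢ[ℝ] X))
    (fun i => hF _ (F.equivFin.symm i).2) Z hZc ‹_›
  haveI hYc' : IsClosed (Y : Set X) := hYc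
  -- quotient space
  haveI : Nonempty (Y : Set X) := ⟨0, Y.zero_mem⟩
  have normq : ∀ x : X, ‖(Submodule.Quotient.mk x : X ⧸ Y)‖ = infDist x (Y : Set X) :=
    fun x => QuotientAddGroup.norm_mk (S := Y.toAddSubgroup) x
  have norm_mk_le : ∀ x : X, ‖(Submodule.Quotient.mk x : X ⧸ Y)‖ ≤ ‖x‖ := fun x =>
    Submodule.Quotient.norm_mk_le Y x
  -- lower bound on the quotient norm for elements of s
  have hsnorm : ∀ x ∈ s, ‖x‖ ≤ ‖(Submodule.Quotient.mk x : X ⧸ Y)‖ := by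
    intro x hx
    rw [normq x, infDist_eq_iInf]
    refine le_ciInf fun y => ?_
    have hyZ : (y : X) ∈ Z := hYZ y.2
    have hyker : Φ (y : X) = 0 := hyZ
    have hφy : φ x (y : X) = 0 := by
      have := congrFun hyker ⟨x, hx⟩
      simpa [Φ, ContinuousLinearMap.pi_apply] using this
    have h1 : ‖x‖ = φ x (x - (y : X)) := by
      rw [map_sub, hφy, hφ2 x, sub_zero]
    rw [dist_eq_norm, h1]
    calc φ x (x - (y : X)) ≤ ‖φ x (x - (y : X))‖ := le_abs_self _
      _ ≤ ‖φ x‖ * ‖x - (y : X)‖ := (φ x).le_opNorm _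
      _ ≤ 1 * ‖x - (y : X)‖ := by
          have := hφ1 x
          have h0 : (0:ℝ) ≤ ‖x - (y : X)‖ := norm_nonneg _
          nlinarith
      _ = ‖x - (y : X)‖ := one_mul _
  -- image of Y in H
  set K : Submodule ℝ H := Y.map ((S : X →L[ℝ] H) : X →ₗ[ℝ] H) with hK
  have hKset : (K : Set H) = (S : X → H) '' (Y : Set X) := rfl
  have hKc : IsClosed (K : Set H) := by
    rw [hKset]
    exact (S.toHomeomorph.isClosedMap) _ hYc
  haveI : CompleteSpace K := hKc.completeSpace_coe
  set gX : X →L[ℝ] H :=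
    (ContinuousLinearMap.id ℝ H - K.subtypeL.comp (K.orthogonalProjection)).comp
      (S : X →L[ℝ] H) with hgX
  have hgXapply : ∀ x : X, gX x = S x - (K.orthogonalProjection (S x) : H) := by
    intro x; simp [hgX]
  have hgY : ∀ y ∈ Y, gX y = 0 := by
    intro y hy
    have hSy : (S y : H) ∈ K := ⟨y, hy, rfl⟩
    rw [hgXapply, show (K.orthogonalProjection (S y) : H) = S y from Submodule.starProjection_eq_self_iff.mpr hSy, sub_self]
  -- the induced map on the quotient
  set gq : (X ⧸ Y) →ₗ[ℝ] H := Y.liftQ (gX : X →ₗ[ℝ] H) (fun y hy => by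
    simpa [LinearMap.mem_ker] using hgY y hy) with hgq
  have hgqmk : ∀ x : X, gq (Submodule.Quotient.mk x) = gX x := fun x => rfl
  -- upper bound
  have hupper : ∀ x : X,
      ‖gX x‖ ≤ ‖(S : X →L[ℝ] H)‖ * ‖(Submodule.Quotient.mk x : X ⧸ Y)‖ := by
    intro x
    have hmin : ∀ y : (Y : Set X), ‖gX x‖ ≤ ‖(S : X →L[ℝ] H)‖ * dist x (y : X) := by
      intro y
      have h1 : ‖gX x‖ ≤ ‖S x - S (y : X)‖ := by
        rw [hgXapply]
        rw [show ‖S x - (K.orthogonalProjection (S x) : H)‖ = ⨅ k : K, ‖S x - (k : H)‖ from Submodule.starProjection_minimal (S x)]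
        have hb : BddBelow (Set.range fun k : K => ‖S x - (k : H)‖) :=
          ⟨0, by rintro r ⟨k, rfl⟩; exact norm_nonneg _⟩
        exact ciInf_le_of_le hb ⟨S (y : X), (y : X), y.2, rfl⟩ le_rfl
      have h2 : ‖S x - S (y : X)‖ ≤ ‖(S : X →L[ℝ] H)‖ * ‖x - (y : X)‖ := by
        have : S x - S (y : X) = (S : X →L[ℝ] H) (x - (y : X)) := by
          simp [map_sub]
        rw [this]
        exact (S : X →L[ℝ] H).le_opNorm _
      rw [dist_eq_norm]
      exact h1.trans h2
    rw [normq x]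
    by_cases hS0 : ‖(S : X →L[ℝ] H)‖ = 0
    · have := hmin ⟨0, Y.zero_mem⟩
      rw [hS0, zero_mul] at this ⊢
      exact this
    · have hSpos : 0 < ‖(S : X →L[ℝ] H)‖ := lt_of_le_of_ne (norm_nonneg _) (Ne.symm hS0)
      rw [infDist_eq_iInf]
      rw [mul_comm, ← div_le_iff₀ hSpos] at *
      refine le_ciInf fun y => ?_
      rw [div_le_iff₀ hSpos, mul_comm]
      exact hmin y
  -- lower bound
  have hlower : ∀ x : X,
      ‖(Submodule.Quotient.mk x : X ⧸ Y)‖ ≤ ‖(S.symm : H →L[ℝ] X)‖ * ‖gX x‖ := by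
    intro x
    have hproj : (K.orthogonalProjection (S x) : H) ∈ K := (K.orthogonalProjection (S x)).2
    obtain ⟨y, hy, hSy⟩ := hproj
    have hxy : x - y = S.symm (gX x) := by
      rw [hgXapply, ← hSy]
      rw [map_sub]
      simp
    rw [normq x]
    calc infDist x (Y : Set X) ≤ dist x y := infDist_le_dist_of_mem hy
      _ = ‖x - y‖ := dist_eq_norm _ _
      _ = ‖S.symm (gX x)‖ := by rw [hxy]
      _ ≤ ‖(S.symm : H →L[ℝ] X)‖ * ‖gX x‖ := (S.symm : H →L[ℝ] X).le_opNorm _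
  -- bounds for gq on the quotient
  set c : ℝ := ‖(S.symm : H →L[ℝ] X)‖⁻¹ ^ 2 with hc_def
  set C : ℝ := ‖(S : X →L[ℝ] H)‖ ^ 2 with hC_def
  have hc0 : 0 ≤ c := by positivity
  have hC0 : 0 ≤ C := by positivity
  have hcq : ∀ v : X ⧸ Y, c * ‖v‖ ^ 2 ≤ ‖gq v‖ ^ 2 := by
    intro v
    obtain ⟨x, rfl⟩ := Submodule.Quotient.mk_surjective Y v
    rw [hgqmk]
    by_cases ha : ‖(S.symm : H →L[ℝ] X)‖ = 0
    · rw [hc_def, ha]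
      simp
    · have hapos : 0 < ‖(S.symm : H →L[ℝ] X)‖ := lt_of_le_of_ne (norm_nonneg _) (Ne.symm ha)
      have h1 : ‖(S.symm : H →L[ℝ] X)‖⁻¹ * ‖(Submodule.Quotient.mk x : X ⧸ Y)‖ ≤ ‖gX x‖ := by
        rw [inv_mul_le_iff₀ hapos]
        exact hlower x
      have h2 := pow_le_pow_left₀ (by positivity) h1 2
      rw [mul_pow] at h2
      exact h2
  have hCq : ∀ v : X ⧸ Y, ‖gq v‖ ^ 2 ≤ C * ‖v‖ ^ 2 := by
    intro v
    obtain ⟨x, rfl⟩ := Submodule.Quotient.mk_surjective Y v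
    rw [hgqmk]
    have h2 := pow_le_pow_left₀ (norm_nonneg _) (hupper x) 2
    rw [mul_pow] at h2
    exact h2
  -- invariant form on the quotient
  obtain ⟨b, hbadd, hbsmul, hbsymm, hblow, hbup, hbinv⟩ :=
    exists_invariant_form gq hc0 hC0 hcq hCq
  -- the units coming from F
  have hTmap : ∀ T ∈ F, Submodule.map (T.toLinearEquiv : X →ₗ[ℝ] X) Y = Y := by
    intro T hT
    have := hYmap (F.equivFin ⟨T, hT⟩)
    rwa [Equiv.symm_apply_apply] at this
  have hinv : ∀ T ∈ F, ∀ x y : X,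
      b (Submodule.Quotient.mk (T x)) (Submodule.Quotient.mk (T y))
        = b (Submodule.Quotient.mk x) (Submodule.Quotient.mk y) := by
    intro T hT x y
    have hmap := hTmap T hT
    have hle : Y ≤ Y.comap (T.toLinearEquiv : X →ₗ[ℝ] X) := by
      intro y hy
      have : (T.toLinearEquiv : X →ₗ[ℝ] X) y ∈ Submodule.map (T.toLinearEquiv : X →ₗ[ℝ] X) Y :=
        ⟨y, hy, rfl⟩
      rw [hmap] at this
      exact this
    have hle' : Y ≤ Y.comap (T.symm.toLinearEquiv : X →ₗ[ℝ] X) := by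
      intro z hz
      rw [← hmap] at hz
      obtain ⟨w, hw, rfl⟩ := hz
      have : (T.symm.toLinearEquiv : X →ₗ[ℝ] X) ((T.toLinearEquiv : X →ₗ[ℝ] X) w) = w := by
        simp
      rw [Submodule.mem_comap, this]
      exact hw
    set Tq : (X ⧸ Y) →ₗ[ℝ] (X ⧸ Y) := Submodule.mapQ Y Y (T.toLinearEquiv : X →ₗ[ℝ] X) hle
      with hTq
    set Tq' : (X ⧸ Y) →ₗ[ℝ] (X ⧸ Y) := Submodule.mapQ Y Y (T.symm.toLinearEquiv : X →ₗ[ℝ] X) hle'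
      with hTq'
    have hTqmk : ∀ x : X, Tq (Submodule.Quotient.mk x) = Submodule.Quotient.mk (T x) :=
      fun x => Submodule.mapQ_apply _ _ _ _
    have hTqmk' : ∀ x : X, Tq' (Submodule.Quotient.mk x) = Submodule.Quotient.mk (T.symm x) :=
      fun x => Submodule.mapQ_apply _ _ _ _
    set TqL : (X ⧸ Y) →L[ℝ] (X ⧸ Y) := LinearMap.toContinuousLinearMap Tq with hTqL
    set TqL' : (X ⧸ Y) →L[ℝ] (X ⧸ Y) := LinearMap.toContinuousLinearMap Tq' with hTqL'
    have hTLmk : ∀ x : X, TqL (Submodule.Quotient.mk x) = Submodule.Quotient.mk (T x) := hTqmk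
    have hTLmk' : ∀ x : X, TqL' (Submodule.Quotient.mk x) = Submodule.Quotient.mk (T.symm x) :=
      hTqmk'
    have hvalinv : TqL * TqL' = 1 := by
      ext v
      obtain ⟨x, rfl⟩ := Submodule.Quotient.mk_surjective Y v
      show TqL (TqL' (Submodule.Quotient.mk x)) = Submodule.Quotient.mk x
      rw [hTLmk', hTLmk]
      simp
    have hinvval : TqL' * TqL = 1 := by
      ext v
      obtain ⟨x, rfl⟩ := Submodule.Quotient.mk_surjective Y v
      show TqL' (TqL (Submodule.Quotient.mk x)) = Submodule.Quotient.mk x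
      rw [hTLmk, hTLmk']
      simp
    set u : ((X ⧸ Y) →L[ℝ] (X ⧸ Y))ˣ := ⟨TqL, TqL', hvalinv, hinvval⟩ with hu
    have humem : u ∈ isoGroup (X ⧸ Y) := by
      intro v
      obtain ⟨x, rfl⟩ := Submodule.Quotient.mk_surjective Y v
      show ‖TqL (Submodule.Quotient.mk x)‖ = ‖(Submodule.Quotient.mk x : X ⧸ Y)‖
      rw [hTLmk, normq, normq]
      have himg : (T : X → X) '' (Y : Set X) = (Y : Set X) := by
        have := congrArg (fun W : Submodule ℝ X => (W : Set X)) hmap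
        simpa [Submodule.map_coe] using this
      rw [← himg, infDist_image T.isometry, himg]
    have := hbinv u humem (Submodule.Quotient.mk x) (Submodule.Quotient.mk y)
    rw [show ((u : ((X ⧸ Y) →L[ℝ] (X ⧸ Y))ˣ) : (X ⧸ Y) →L[ℝ] (X ⧸ Y)) = TqL from rfl] at this
    rw [hTLmk, hTLmk] at this
    exact this
  -- assemble
  refine ⟨fun x y => b (Submodule.Quotient.mk x) (Submodule.Quotient.mk y),
    ?_, ?_, ?_, ?_, ?_, ?_, ?_⟩
  · intro x y z
    show b (Submodule.Quotient.mk (x + y)) (Submodule.Quotient.mk z)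
      = b (Submodule.Quotient.mk x) (Submodule.Quotient.mk z)
        + b (Submodule.Quotient.mk y) (Submodule.Quotient.mk z)
    rw [show (Submodule.Quotient.mk (x + y) : X ⧸ Y)
      = Submodule.Quotient.mk x + Submodule.Quotient.mk y from rfl]
    exact hbadd _ _ _
  · intro a x y
    show b (Submodule.Quotient.mk (a • x)) (Submodule.Quotient.mk y)
      = a * b (Submodule.Quotient.mk x) (Submodule.Quotient.mk y)
    rw [show (Submodule.Quotient.mk (a • x) : X ⧸ Y)
      = a • (Submodule.Quotient.mk x : X ⧸ Y) from rfl]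
    exact hbsmul _ _ _
  · intro x y
    exact hbsymm _ _
  · intro x
    calc b (Submodule.Quotient.mk x) (Submodule.Quotient.mk x)
        ≤ C * ‖(Submodule.Quotient.mk x : X ⧸ Y)‖ ^ 2 := hbup _
      _ ≤ C * ‖x‖ ^ 2 :=
          mul_le_mul_of_nonneg_left
            (pow_le_pow_left₀ (norm_nonneg (Submodule.Quotient.mk x : X ⧸ Y))
              (norm_mk_le x) 2) hC0
  · intro x hx
    calc c * ‖x‖ ^ 2 ≤ c * ‖(Submodule.Quotient.mk x : X ⧸ Y)‖ ^ 2 :=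
          mul_le_mul_of_nonneg_left
            (pow_le_pow_left₀ (norm_nonneg x) (hsnorm x hx) 2) hc0
      _ ≤ b (Submodule.Quotient.mk x) (Submodule.Quotient.mk x) := hblow _
  · intro x
    have := hblow (Submodule.Quotient.mk x)
    have h2 : 0 ≤ c * ‖(Submodule.Quotient.mk x : X ⧸ Y)‖ ^ 2 := by positivity
    linarith
  · exact hinv

end Stage

/-- `T` belongs to the closure of `G` in the strong operator topology. -/
def InSOTClosure {X : Type*} [NormedAddCommGroup X] [NormedSpace ℝ X]
    (G : Subgroup (X ≃ₗᵢ[ℝ] X)) (T : X →L[ℝ] X) : Prop :=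
  ∀ (s : Finset X) (ε : ℝ), 0 < ε → ∃ S ∈ G, ∀ z ∈ s, ‖S z - T z‖ < ε

set_option maxHeartbeats 2000000 in
theorem stmt9 {X : Type*} [NormedAddCommGroup X] [NormedSpace ℝ X] [CompleteSpace X]
    {H : Type*} [NormedAddCommGroup H] [InnerProductSpace ℝ H]
    (G : Subgroup (X ≃ₗᵢ[ℝ] X)) (hstar : PropStar G)
    (S : X ≃L[ℝ] H) :
    ∃ B : X → X → ℝ,
      (∀ x y z : X, B (x + y) z = B x z + B y z) ∧
      (∀ (a : ℝ) (x y : X), B (a • x) y = a * B x y) ∧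
      (∀ x y : X, B x y = B y x) ∧
      (∀ x : X, ‖(S.symm : H →L[ℝ] X)‖⁻¹ ^ 2 * ‖x‖ ^ 2 ≤ B x x ∧
        B x x ≤ ‖(S : X →L[ℝ] H)‖ ^ 2 * ‖x‖ ^ 2) ∧
      (∀ T : X →L[ℝ] X, InSOTClosure G T → ∀ x y : X, B (T x) (T y) = B x y) := by
  classical
  set c : ℝ := ‖(S.symm : H →L[ℝ] X)‖⁻¹ ^ 2 with hc_def
  set C : ℝ := ‖(S : X →L[ℝ] H)‖ ^ 2 with hC_def
  have hc0 : 0 ≤ c := by positivity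
  have hC0 : 0 ≤ C := by positivity
  -- the directed family of approximating forms
  have hBex : ∀ i : Finset (X ≃ₗᵢ[ℝ] X) × Finset X, ∃ B : X → X → ℝ,
      (∀ x y z : X, B (x + y) z = B x z + B y z) ∧
      (∀ (a : ℝ) (x y : X), B (a • x) y = a * B x y) ∧
      (∀ x y : X, B x y = B y x) ∧
      (∀ x : X, B x x ≤ C * ‖x‖ ^ 2) ∧
      (∀ x ∈ i.2, c * ‖x‖ ^ 2 ≤ B x x) ∧
      (∀ x : X, 0 ≤ B x x) ∧
      (∀ T ∈ i.1.filter (fun g => g ∈ G), ∀ x y : X, B (T x) (T y) = B x y) := fun i =>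
    stage_lemma G hstar S (i.1.filter (fun g => g ∈ G))
      (fun g hg => (Finset.mem_filter.mp hg).2) i.2
  choose B hadd hsmul hsymm hup hlow h0 hinvF using hBex
  haveI : Nonempty (Finset (X ≃ₗᵢ[ℝ] X) × Finset X) := ⟨(∅, ∅)⟩
  let U : Ultrafilter (Finset (X ≃ₗᵢ[ℝ] X) × Finset X) := Ultrafilter.of Filter.atTop
  have hU : (U : Filter (Finset (X ≃ₗᵢ[ℝ] X) × Finset X)) ≤ Filter.atTop :=
    Ultrafilter.of_le _
  have habs : ∀ i x y, |B i x y| ≤ C * ‖x‖ * ‖y‖ := fun i x y =>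
    form_abs_le hC0 (hadd i) (hsmul i) (hsymm i) (h0 i) (hup i) x y
  have hlim : ∀ x y : X, ∃ l : ℝ,
      Filter.Tendsto (fun i => B i x y) (U : Filter _) (nhds l) := by
    intro x y
    have hle : (U.map fun i => B i x y : Filter ℝ)
        ≤ Filter.principal (Icc (-(C * ‖x‖ * ‖y‖)) (C * ‖x‖ * ‖y‖)) := by
      rw [Filter.le_principal_iff]
      have : ∀ i, B i x y ∈ Icc (-(C * ‖x‖ * ‖y‖)) (C * ‖x‖ * ‖y‖) := by
        intro i
        have h1 := habs i x y
        have h2 := neg_abs_le (B i x y)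
        have h3 := le_abs_self (B i x y)
        rw [mem_Icc]
        constructor <;> linarith
      exact Filter.mem_map.mpr (Filter.univ_mem' this)
    obtain ⟨l, _, hl⟩ := isCompact_Icc.ultrafilter_le_nhds (U.map fun i => B i x y) hle
    exact ⟨l, hl⟩
  choose L hL using hlim
  -- basic properties of the limit form
  have hLadd : ∀ x y z : X, L (x + y) z = L x z + L y z := by
    intro x y z
    refine tendsto_nhds_unique (hL (x + y) z) ?_
    exact ((hL x z).add (hL y z)).congr fun i => (hadd i x y z).symm
  have hLsmul : ∀ (a : ℝ) (x y : X), L (a • x) y = a * L x y := by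
    intro a x y
    refine tendsto_nhds_unique (hL (a • x) y) ?_
    exact ((hL x y).const_mul a).congr fun i => (hsmul i a x y).symm
  have hLsymm : ∀ x y : X, L x y = L y x := by
    intro x y
    refine tendsto_nhds_unique (hL x y) ?_
    exact (hL y x).congr fun i => hsymm i y x
  have hLup : ∀ x : X, L x x ≤ C * ‖x‖ ^ 2 := fun x =>
    le_of_tendsto (hL x x) (Filter.Eventually.of_forall fun i => hup i x)
  have hLlow : ∀ x : X, c * ‖x‖ ^ 2 ≤ L x x := by
    intro x
    refine ge_of_tendsto (hL x x) ?_
    have hev : ∀ᶠ i in (Filter.atTop : Filter (Finset (X ≃ₗᵢ[ℝ] X) × Finset X)),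
        c * ‖x‖ ^ 2 ≤ B i x x := by
      refine Filter.eventually_atTop.mpr ⟨(∅, {x}), fun i hi => ?_⟩
      exact hlow i x (hi.2 (Finset.mem_singleton_self x))
    exact hev.filter_mono hU
  have hL0 : ∀ x : X, 0 ≤ L x x := by
    intro x
    have := hLlow x
    have h2 : 0 ≤ c * ‖x‖ ^ 2 := by positivity
    linarith
  have hLG : ∀ T : X ≃ₗᵢ[ℝ] X, T ∈ G → ∀ x y : X, L (T x) (T y) = L x y := by
    intro T hTG x y
    refine tendsto_nhds_unique ?_ (hL x y)
    have hev : ∀ᶠ i in (Filter.atTop : Filter (Finset (X ≃ₗᵢ[ℝ] X) × Finset X)),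
        B i (T x) (T y) = B i x y := by
      refine Filter.eventually_atTop.mpr ⟨({T}, ∅), fun i hi => ?_⟩
      have hTi : T ∈ i.1 := hi.1 (Finset.mem_singleton_self T)
      exact hinvF i T (Finset.mem_filter.mpr ⟨hTi, hTG⟩) x y
    have hev' : (fun i => B i (T x) (T y)) =ᶠ[(U : Filter _)] fun i => B i x y :=
      hev.filter_mono hU
    exact Filter.Tendsto.congr' hev' (hL (T x) (T y))
  have hLabs : ∀ x y : X, |L x y| ≤ C * ‖x‖ * ‖y‖ := fun x y =>
    form_abs_le hC0 hLadd hLsmul hLsymm hL0 hLup x y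
  refine ⟨L, hLadd, hLsmul, hLsymm, fun x => ⟨hLlow x, hLup x⟩, ?_⟩
  -- invariance under the strong operator closure
  intro T hT x y
  have key : ∀ ε : ℝ, 0 < ε →
      |L (T x) (T y) - L x y| ≤ C * (‖T‖ * ‖y‖ + ‖x‖) * ε := by
    intro ε hε
    obtain ⟨S₀, hS₀G, hS₀⟩ := hT {x, y} ε hε
    have h1 : ‖S₀ x - T x‖ < ε := hS₀ x (by simp)
    have h2 : ‖S₀ y - T y‖ < ε := hS₀ y (by simp)
    have hLS : L (S₀ x) (S₀ y) = L x y := hLG S₀ hS₀G x y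
    have e1 : L (T x) (T y) - L (S₀ x) (T y) = L (T x - S₀ x) (T y) :=
      (form_sub hLadd hLsmul (T x) (S₀ x) (T y)).symm
    have e2 : L (S₀ x) (T y) - L (S₀ x) (S₀ y) = L (T y - S₀ y) (S₀ x) := by
      rw [hLsymm (S₀ x) (T y), hLsymm (S₀ x) (S₀ y)]
      exact (form_sub hLadd hLsmul (T y) (S₀ y) (S₀ x)).symm
    have b1 : |L (T x - S₀ x) (T y)| ≤ C * ε * (‖T‖ * ‖y‖) := by
      have := hLabs (T x - S₀ x) (T y)
      have hn1 : ‖T x - S₀ x‖ ≤ ε := by rw [norm_sub_rev]; linarith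
      have hn2 : ‖T y‖ ≤ ‖T‖ * ‖y‖ := T.le_opNorm y
      have hn3 : (0:ℝ) ≤ ‖T y‖ := norm_nonneg _
      have hn4 : (0:ℝ) ≤ ‖T x - S₀ x‖ := norm_nonneg _
      have hstep : C * ‖T x - S₀ x‖ * ‖T y‖ ≤ C * ε * (‖T‖ * ‖y‖) :=
        mul_le_mul (mul_le_mul_of_nonneg_left hn1 hC0) hn2 hn3 (by positivity)
      linarith
    have b2 : |L (T y - S₀ y) (S₀ x)| ≤ C * ε * ‖x‖ := by
      have := hLabs (T y - S₀ y) (S₀ x)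
      have hn1 : ‖T y - S₀ y‖ ≤ ε := by rw [norm_sub_rev]; linarith
      have hn2 : ‖S₀ x‖ = ‖x‖ := S₀.norm_map x
      have hn4 : (0:ℝ) ≤ ‖T y - S₀ y‖ := norm_nonneg _
      have hn5 : (0:ℝ) ≤ ‖x‖ := norm_nonneg _
      have hstep : C * ‖T y - S₀ y‖ * ‖S₀ x‖ ≤ C * ε * ‖x‖ := by
        rw [hn2]
        exact mul_le_mul_of_nonneg_right (mul_le_mul_of_nonneg_left hn1 hC0) hn5
      linarith
    have hsplit : L (T x) (T y) - L x y
        = L (T x - S₀ x) (T y) + L (T y - S₀ y) (S₀ x) := by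
      rw [← e1, ← e2, ← hLS]; ring
    rw [hsplit]
    calc |L (T x - S₀ x) (T y) + L (T y - S₀ y) (S₀ x)|
        ≤ |L (T x - S₀ x) (T y)| + |L (T y - S₀ y) (S₀ x)| := abs_add_le _ _
      _ ≤ C * ε * (‖T‖ * ‖y‖) + C * ε * ‖x‖ := add_le_add b1 b2
      _ = C * (‖T‖ * ‖y‖ + ‖x‖) * ε := by ring
  have hKnn : 0 ≤ C * (‖T‖ * ‖y‖ + ‖x‖) := by positivity
  have habs0 : |L (T x) (T y) - L x y| ≤ 0 := by
    by_contra hcon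
    push_neg at hcon
    set d := |L (T x) (T y) - L x y| with hd
    set K := C * (‖T‖ * ‖y‖ + ‖x‖) with hK
    have hε : 0 < d / (K + 1) := by positivity
    have hkey := key _ hε
    have : K * (d / (K + 1)) < d := by
      rw [div_eq_inv_mul, ← mul_assoc]
      have h1 : K * (K + 1)⁻¹ < 1 := by
        rw [mul_inv_lt_iff₀ (by linarith)]
        linarith
      nlinarith
    linarith
  have := abs_nonneg (L (T x) (T y) - L x y)
  have : L (T x) (T y) - L x y = 0 := by
    have := abs_eq_zero.mp (le_antisymm habs0 this)
    exact this
  linarith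
end

section
/- Let X be a real Banach space and let x, y, z₀ ∈ S_X with dist(y, span{z₀}) = 1, and let T₂ be a surjective linear isometry of X with max(‖T₂(z₀) − z₀‖, ‖T₂(y) − x‖) < ε/4 for some 0 < ε < 1. Suppose g, h ∈ X* with ‖g‖, ‖h‖ ≤ 2, g(z₀) = h(y) = 1, g(y) = 0, h(z₀) = 0. Then U(v) := T₂(v) + g(v)(z₀ − T₂(z₀)) + h(v)(x − T₂(y)) defines a bounded linear isomorphism of X with U(z₀) = z₀, U(y) = x, and ‖T₂ − U‖ < ε. -/
theorem stmt13 {X : Type*} [NormedAddCommGroup X] [NormedSpace ℝ X] [CompleteSpace X]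
    (x y z₀ : X) (hx : ‖x‖ = 1) (hy : ‖y‖ = 1) (hz₀ : ‖z₀‖ = 1)
    (hdist : Metric.infDist y (Submodule.span ℝ {z₀} : Set X) = 1)
    (T₂ : X ≃ₗᵢ[ℝ] X) {ε : ℝ} (hε₀ : 0 < ε) (hε₁ : ε < 1)
    (hT₂ : max ‖T₂ z₀ - z₀‖ ‖T₂ y - x‖ < ε / 4)
    (g h : X →L[ℝ] ℝ) (hg : ‖g‖ ≤ 2) (hh : ‖h‖ ≤ 2)
    (hgz : g z₀ = 1) (hhy : h y = 1) (hgy : g y = 0) (hhz : h z₀ = 0) :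
    ∃ U : X ≃L[ℝ] X,
      (∀ v : X, U v = T₂ v + g v • (z₀ - T₂ z₀) + h v • (x - T₂ y)) ∧
      U z₀ = z₀ ∧ U y = x ∧
      ‖(T₂ : X →L[ℝ] X) - (U : X →L[ℝ] X)‖ < ε := by
  set A : X →L[ℝ] X := g.smulRight (z₀ - T₂ z₀)
  set B : X →L[ℝ] X := h.smulRight (x - T₂ y)
  set V : X →L[ℝ] X := (T₂ : X →L[ℝ] X) + A + B with hV
  have h1 : ‖T₂ z₀ - z₀‖ < ε / 4 := lt_of_le_of_lt (le_max_left _ _) hT₂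
  have h2 : ‖T₂ y - x‖ < ε / 4 := lt_of_le_of_lt (le_max_right _ _) hT₂
  have hA : ‖A‖ < ε / 2 := by
    rw [ContinuousLinearMap.norm_smulRight_apply, norm_sub_rev]
    nlinarith [norm_nonneg g, norm_nonneg (T₂ z₀ - z₀)]
  have hB : ‖B‖ < ε / 2 := by
    rw [ContinuousLinearMap.norm_smulRight_apply, norm_sub_rev]
    nlinarith [norm_nonneg h, norm_nonneg (T₂ y - x)]
  have hnorm : ‖(T₂ : X →L[ℝ] X) - V‖ < ε := by
    have : (T₂ : X →L[ℝ] X) - V = -(A + B) := by rw [hV]; abel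
    rw [this, norm_neg]
    calc ‖A + B‖ ≤ ‖A‖ + ‖B‖ := norm_add_le _ _
    _ < ε / 2 + ε / 2 := by linarith
    _ = ε := by ring
  -- T₂ as a unit of the ring X →L[ℝ] X
  set u : (X →L[ℝ] X)ˣ := (ContinuousLinearEquiv.unitsEquiv ℝ X).symm
    T₂.toContinuousLinearEquiv with hu
  have hucoe : (u : X →L[ℝ] X) = (T₂ : X →L[ℝ] X) := rfl
  have huinv : ∀ w : X, ‖(↑u⁻¹ : X →L[ℝ] X) w‖ = ‖w‖ := fun w => by
    show ‖T₂.symm w‖ = ‖w‖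
    exact T₂.symm.norm_map w
  have huinvnorm : ‖(↑u⁻¹ : X →L[ℝ] X)‖ ≤ 1 :=
    ContinuousLinearMap.opNorm_le_bound _ zero_le_one (fun w => by rw [huinv, one_mul])
  have hXnt : Nontrivial X := by
    refine ⟨z₀, 0, fun hc => ?_⟩
    rw [hc, norm_zero] at hz₀; linarith
  have hpos : (0:ℝ) < ‖(↑u⁻¹ : X →L[ℝ] X)‖ := Units.norm_pos u⁻¹
  have hnear : ‖V - (u : X →L[ℝ] X)‖ < ‖(↑u⁻¹ : X →L[ℝ] X)‖⁻¹ := by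
    rw [hucoe, norm_sub_rev]
    calc ‖(T₂ : X →L[ℝ] X) - V‖ < ε := hnorm
    _ < 1 := hε₁
    _ ≤ ‖(↑u⁻¹ : X →L[ℝ] X)‖⁻¹ := (one_le_inv₀ hpos).mpr huinvnorm
  set w : (X →L[ℝ] X)ˣ := Units.ofNearby u V hnear with hw
  refine ⟨ContinuousLinearEquiv.unitsEquiv ℝ X w, ?_, ?_, ?_, ?_⟩
  · intro v
    show V v = _
    simp [hV, A, B, ContinuousLinearMap.add_apply]
  · show V z₀ = z₀
    simp [hV, A, B, ContinuousLinearMap.add_apply, hgz, hhz]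
  · show V y = x
    simp [hV, A, B, ContinuousLinearMap.add_apply, hgy, hhy]
  · exact hnorm
end

section
/- Let X be a real Banach space whose norm ‖·‖ is convex-transitive (with respect to the full isometry group), and suppose |||·||| is an equivalent norm on X that is invariant under every surjective linear isometry of (X, ‖·‖), with ‖·‖ ≤ |||·||| and sup{‖y‖ : |||y||| = 1} = 1. Then ‖·‖ = |||·|||. -/
theorem stmt14 {X : Type*} [NormedAddCommGroup X] [NormedSpace ℝ X] [CompleteSpace X]
    (hconv : ∀ x : X, ‖x‖ = 1 →
      closure (convexHull ℝ {y : X | ∃ T : X ≃ₗᵢ[ℝ] X, y = T x})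
        = Metric.closedBall (0 : X) 1)
    (N : X → ℝ)
    (hN₀ : ∀ x : X, N x = 0 ↔ x = 0)
    (hNsmul : ∀ (a : ℝ) (x : X), N (a • x) = |a| * N x)
    (hNadd : ∀ x y : X, N (x + y) ≤ N x + N y)
    (hNequiv : ∃ c : ℝ, ∀ x : X, N x ≤ c * ‖x‖)
    (hNinv : ∀ (T : X ≃ₗᵢ[ℝ] X) (x : X), N (T x) = N x)
    (hle : ∀ x : X, ‖x‖ ≤ N x)
    (hsup : sSup {r : ℝ | ∃ y : X, N y = 1 ∧ r = ‖y‖} = 1) :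
    ∀ x : X, ‖x‖ = N x := by
  obtain ⟨c, hc⟩ := hNequiv
  have hNnonneg : ∀ x : X, 0 ≤ N x := fun x => le_trans (norm_nonneg x) (hle x)
  have hNneg : ∀ x : X, N (-x) = N x := by
    intro x
    have := hNsmul (-1) x
    simpa using this
  have hlip : ∀ a b : X, |N a - N b| ≤ c * ‖a - b‖ := by
    intro a b
    have h1 : N a ≤ N (a - b) + N b := by
      have := hNadd (a - b) b; simpa using this
    have h2 : N b ≤ N (a - b) + N a := by
      have h3 : N (b - a) = N (a - b) := by
        rw [← hNneg (a - b)]; congr 1; abel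
      have := hNadd (b - a) a
      rw [h3] at this
      simpa using this
    rw [abs_sub_le_iff]
    constructor
    · linarith [hc (a - b)]
    · linarith [hc (a - b)]
  have hcont : Continuous N := by
    have hlw : LipschitzWith (Real.toNNReal c) N := by
      apply LipschitzWith.of_dist_le_mul
      intro a b
      rw [Real.dist_eq, dist_eq_norm]
      exact le_trans (hlip a b)
        (mul_le_mul_of_nonneg_right (Real.le_coe_toNNReal c) (norm_nonneg _))
    exact hlw.continuous
  -- key: ∀ x, ‖x‖ = 1 → N x ≤ 1
  have key : ∀ x : X, ‖x‖ = 1 → N x ≤ 1 := by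
    intro x hx
    by_contra hcon
    push_neg at hcon
    set S := {r : ℝ | ∃ y : X, N y = 1 ∧ r = ‖y‖} with hS
    have hbdd : BddAbove S := by
      refine ⟨1, ?_⟩
      rintro r ⟨y, hy, rfl⟩
      calc ‖y‖ ≤ N y := hle y
        _ = 1 := hy
    have hne : S.Nonempty := by
      by_contra hne
      rw [Set.not_nonempty_iff_eq_empty] at hne
      rw [hne, Real.sSup_empty] at hsup
      norm_num at hsup
    have hNx0 : (0:ℝ) < N x := by linarith
    have hinv1 : (N x)⁻¹ < sSup S := by
      rw [hsup]
      exact inv_lt_one_of_one_lt₀ hcon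
    obtain ⟨r, hrS, hr⟩ := exists_lt_of_lt_csSup hne hinv1
    obtain ⟨y, hy1, rfl⟩ := hrS
    have hypos : (0:ℝ) < ‖y‖ := lt_trans (inv_pos.mpr hNx0) hr
    set u : X := ‖y‖⁻¹ • y with hu
    have hunorm : ‖u‖ = 1 := by
      rw [hu, norm_smul, norm_inv, norm_norm]
      field_simp
    have hNu : N u = ‖y‖⁻¹ := by
      rw [hu, hNsmul, hy1, abs_of_pos (inv_pos.mpr hypos), mul_one]
    have hK : ∀ z ∈ closure (convexHull ℝ {z : X | ∃ T : X ≃ₗᵢ[ℝ] X, z = T u}),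
        N z ≤ ‖y‖⁻¹ := by
      intro z hz
      have hclosed : IsClosed {w : X | N w ≤ ‖y‖⁻¹} :=
        isClosed_le hcont continuous_const
      have hconvex : Convex ℝ {w : X | N w ≤ ‖y‖⁻¹} := by
        intro a ha b hb s t hs ht hst
        have := hNadd (s • a) (t • b)
        rw [hNsmul, hNsmul, abs_of_nonneg hs, abs_of_nonneg ht] at this
        calc N (s • a + t • b) ≤ s * N a + t * N b := this
          _ ≤ s * ‖y‖⁻¹ + t * ‖y‖⁻¹ := by
              gcongr
              exacts [ha, hb]
          _ = ‖y‖⁻¹ := by rw [← add_mul, hst, one_mul]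
      have hsub : {z : X | ∃ T : X ≃ₗᵢ[ℝ] X, z = T u} ⊆ {w : X | N w ≤ ‖y‖⁻¹} := by
        rintro _ ⟨T, rfl⟩
        simp only [Set.mem_setOf_eq, hNinv T u, hNu, le_refl]
      exact closure_minimal (convexHull_min hsub hconvex) hclosed hz
    have hxmem : x ∈ closure (convexHull ℝ {z : X | ∃ T : X ≃ₗᵢ[ℝ] X, z = T u}) := by
      rw [hconv u hunorm]
      simp [hx]
    have : N x ≤ ‖y‖⁻¹ := hK x hxmem
    have : N x < N x := by
      calc N x ≤ ‖y‖⁻¹ := this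
        _ < N x := inv_lt_of_inv_lt₀ hNx0 hr
    exact lt_irrefl _ this
  intro x
  rcases eq_or_ne x 0 with rfl | hx0
  · simp [(hN₀ 0).mpr rfl]
  · have hxpos : (0:ℝ) < ‖x‖ := norm_pos_iff.mpr hx0
    set x' : X := ‖x‖⁻¹ • x with hx'
    have hx'norm : ‖x'‖ = 1 := by
      rw [hx', norm_smul, norm_inv, norm_norm]; field_simp
    have h1 : N x' ≤ 1 := key x' hx'norm
    have h2 : 1 ≤ N x' := hx'norm ▸ hle x'
    have h3 : N x' = 1 := le_antisymm h1 h2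
    have : N x' = ‖x‖⁻¹ * N x := by rw [hx', hNsmul, abs_of_pos (inv_pos.mpr hxpos)]
    rw [this] at h3
    field_simp at h3
    linarith
end

section
/- If H is a real Hilbert space, then the subgroup G_F of surjective linear isometries T with Rank(T − Id) < ∞ is dense in the full isometry group G(H) in the strong operator topology: for every surjective linear isometry U of H, every finite set x₁,…,xₙ ∈ H, and every ε > 0, there exists T ∈ G_F with ‖T(xᵢ) − U(xᵢ)‖ < ε for all i. -/
open Module

theorem stmt15 {H : Type*} [NormedAddCommGroup H] [InnerProductSpace ℝ H] [CompleteSpace H]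
    (U : H ≃ₗᵢ[ℝ] H) (n : ℕ) (x : Fin n → H) {ε : ℝ} (hε : 0 < ε) :
    ∃ T : H ≃ₗᵢ[ℝ] H,
      FiniteDimensional ℝ (LinearMap.range ((T.toLinearEquiv : H →ₗ[ℝ] H) - LinearMap.id)) ∧
      ∀ i : Fin n, ‖T (x i) - U (x i)‖ < ε := by
  classical
  set E : Submodule ℝ H :=
    Submodule.span ℝ (Set.range x ∪ Set.range (fun i => U (x i))) with hEdef
  haveI hfin : FiniteDimensional ℝ E :=
    FiniteDimensional.span_of_finite ℝ ((Set.finite_range x).union (Set.finite_range _))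
  haveI : CompleteSpace E := FiniteDimensional.complete ℝ E
  have hxE : ∀ i, x i ∈ E := fun i => Submodule.subset_span (Or.inl ⟨i, rfl⟩)
  have hUxE : ∀ i, U (x i) ∈ E := fun i => Submodule.subset_span (Or.inr ⟨i, rfl⟩)
  set S : Submodule ℝ E := Submodule.span ℝ (Set.range fun i => (⟨x i, hxE i⟩ : E)) with hSdef
  have hS : S ≤ Submodule.comap E.subtype
      (Submodule.comap (U.toLinearEquiv : H →ₗ[ℝ] H) E) := by
    rw [hSdef, Submodule.span_le]
    rintro _ ⟨i, rfl⟩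
    simpa using hUxE i
  let L0 : S →ₗ[ℝ] E :=
    ((U.toLinearEquiv : H →ₗ[ℝ] H).comp (E.subtype.comp S.subtype)).codRestrict E
      (fun s => hS s.2)
  have hL0 : ∀ s : S, (L0 s : H) = U ((s : E) : H) := fun s => rfl
  let L : S →ₗᵢ[ℝ] E := ⟨L0, by
    intro s
    rw [show ‖L0 s‖ = ‖(L0 s : H)‖ from rfl, hL0, U.norm_map]
    rfl⟩
  let f : E ≃ₗᵢ[ℝ] E := L.extend.toLinearIsometryEquiv rfl
  set P := E.orthogonalProjectionOnto with hPdef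
  -- key projection facts
  have hP : ∀ (a : E) (b : H), b ∈ Eᗮ → P ((a : H) + b) = a := by
    intro a b hb
    rw [map_add, Submodule.orthogonalProjectionOnto_mem_subspace_eq_self,
      Submodule.orthogonalProjectionOnto_apply_of_mem_orthogonal hb, add_zero]
  have hPerp : ∀ y : H, y - (P y : H) ∈ Eᗮ := fun y =>
    E.sub_starProjection_mem_orthogonal y
  -- the forward and backward maps
  let Tf : H → H := fun y => ((f (P y) : H)) + (y - (P y : H))
  let Tb : H → H := fun y => ((f.symm (P y) : H)) + (y - (P y : H))
  have hdec : ∀ (g : E ≃ₗᵢ[ℝ] E) (y : H),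
      P (((g (P y) : H)) + (y - (P y : H))) = g (P y) := fun g y => hP _ _ (hPerp y)
  have hTbTf : ∀ y, Tb (Tf y) = y := by
    intro y
    simp only [Tb, Tf, hdec f y]
    rw [LinearIsometryEquiv.symm_apply_apply]
    abel
  have hTfTb : ∀ y, Tf (Tb y) = y := by
    intro y
    simp only [Tb, Tf, hdec f.symm y]
    rw [LinearIsometryEquiv.apply_symm_apply]
    abel
  have hTfadd : ∀ y z, Tf (y + z) = Tf y + Tf z := by
    intro y z
    simp only [Tf, map_add, Submodule.coe_add]
    abel
  have hTfsmul : ∀ (c : ℝ) y, Tf (c • y) = c • Tf y := by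
    intro c y
    simp only [Tf, map_smul, Submodule.coe_smul, smul_add, smul_sub]
  have hnorm : ∀ y, ‖Tf y‖ = ‖y‖ := by
    intro y
    have h1 : ‖Tf y‖ ^ 2 = ‖(f (P y) : H)‖ ^ 2 + ‖y - (P y : H)‖ ^ 2 := by
      have hz : inner ℝ ((f (P y) : H)) (y - (P y : H)) = (0 : ℝ) :=
        Submodule.inner_right_of_mem_orthogonal (f (P y)).2 (hPerp y)
      rw [show Tf y = ((f (P y) : H)) + (y - (P y : H)) from rfl,
        @norm_add_sq_real, hz]
      ring
    have h2 : ‖y‖ ^ 2 = ‖(P y : H)‖ ^ 2 + ‖y - (P y : H)‖ ^ 2 := by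
      have hz : inner ℝ ((P y : H)) (y - (P y : H)) = (0 : ℝ) :=
        Submodule.inner_right_of_mem_orthogonal (P y).2 (hPerp y)
      have hy : y = ((P y : H)) + (y - (P y : H)) := by abel
      calc ‖y‖ ^ 2 = ‖((P y : H)) + (y - (P y : H))‖ ^ 2 := by rw [← hy]
        _ = _ := by rw [@norm_add_sq_real, hz]; ring
    have h3 : ‖(f (P y) : H)‖ = ‖(P y : H)‖ := by
      rw [show ‖(f (P y) : H)‖ = ‖f (P y)‖ from rfl, f.norm_map]; rfl
    have h4 : ‖Tf y‖ ^ 2 = ‖y‖ ^ 2 := by rw [h1, h2, h3]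
    have := congrArg Real.sqrt h4
    rwa [Real.sqrt_sq (norm_nonneg _), Real.sqrt_sq (norm_nonneg _)] at this
  let Teq : H ≃ₗ[ℝ] H :=
    { toFun := Tf
      invFun := Tb
      left_inv := hTbTf
      right_inv := hTfTb
      map_add' := hTfadd
      map_smul' := hTfsmul }
  let T : H ≃ₗᵢ[ℝ] H := ⟨Teq, hnorm⟩
  refine ⟨T, ?_, ?_⟩
  · have hle : LinearMap.range ((T.toLinearEquiv : H →ₗ[ℝ] H) - LinearMap.id) ≤ E := by
      rintro _ ⟨y, rfl⟩
      have : ((T.toLinearEquiv : H →ₗ[ℝ] H) - (LinearMap.id : H →ₗ[ℝ] H)) y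
          = ((f (P y) : H)) - ((P y : H)) := by
        rw [LinearMap.sub_apply, LinearMap.id_apply]
        show Tf y - y = _
        simp only [Tf]; abel
      rw [this]
      exact sub_mem (f (P y)).2 (P y).2
    exact Submodule.finiteDimensional_of_le hle
  · intro i
    have hPx : P (x i) = ⟨x i, hxE i⟩ := by
      apply Subtype.ext
      exact E.starProjection_eq_self_iff.2 (hxE i)
    have hsi : (⟨x i, hxE i⟩ : E) ∈ S := Submodule.subset_span ⟨i, rfl⟩
    have hfx : f (⟨x i, hxE i⟩ : E) = L ⟨⟨x i, hxE i⟩, hsi⟩ := by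
      show L.extend.toLinearIsometryEquiv rfl _ = _
      rw [LinearIsometry.toLinearIsometryEquiv_apply]
      exact L.extend_apply ⟨⟨x i, hxE i⟩, hsi⟩
    have hTx : T (x i) = U (x i) := by
      show Tf (x i) = U (x i)
      simp only [Tf, hPx, hfx]
      rw [show ((L ⟨⟨x i, hxE i⟩, hsi⟩ : E) : H) = U (x i) from rfl]
      abel
    rw [hTx, sub_self, norm_zero]
    exact hε
end

section
/- Let X be a real Banach space that is maximally normed and admits an inner product (·|·) invariant under its full isometry group G(X), whose induced norm |||x||| = √(x|x) is equivalent to ‖·‖. Then (X, ‖·‖) is isometric to a Hilbert space (indeed ‖·‖ is a constant multiple of |||·|||). -/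
/-- The norm of `X` is maximal: whenever `N` is an equivalent norm whose isometry group
contains that of `‖·‖`, the two isometry groups coincide. -/
def MaximalNorm (X : Type*) [NormedAddCommGroup X] [NormedSpace ℝ X] : Prop :=
  ∀ N : X → ℝ,
    (∀ x : X, N x = 0 ↔ x = 0) →
    (∀ (a : ℝ) (x : X), N (a • x) = |a| * N x) →
    (∀ x y : X, N (x + y) ≤ N x + N y) →
    (∃ c₁ c₂ : ℝ, 0 < c₁ ∧ ∀ x : X, c₁ * ‖x‖ ≤ N x ∧ N x ≤ c₂ * ‖x‖) →
    (∀ e : X ≃ₗ[ℝ] X, (∀ x, ‖e x‖ = ‖x‖) → ∀ x, N (e x) = N x) →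
    (∀ e : X ≃ₗ[ℝ] X, (∀ x, N (e x) = N x) → ∀ x, ‖e x‖ = ‖x‖)

theorem stmt17 {X : Type*} [NormedAddCommGroup X] [NormedSpace ℝ X] [CompleteSpace X]
    (hmax : MaximalNorm X)
    (B : X → X → ℝ)
    (hbil₁ : ∀ x y z : X, B (x + y) z = B x z + B y z)
    (hbil₂ : ∀ (a : ℝ) (x y : X), B (a • x) y = a * B x y)
    (hsymm : ∀ x y : X, B x y = B y x)
    (hequiv : ∃ c₁ c₂ : ℝ, 0 < c₁ ∧ ∀ x : X, c₁ * ‖x‖ ^ 2 ≤ B x x ∧ B x x ≤ c₂ * ‖x‖ ^ 2)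
    (hinv : ∀ (T : X ≃ₗᵢ[ℝ] X) (x y : X), B (T x) (T y) = B x y) :
    ∃ c : ℝ, 0 < c ∧ ∀ x : X, ‖x‖ = c * Real.sqrt (B x x) := by
  obtain ⟨c₁, c₂, hc₁, hc⟩ := hequiv
  -- basic bilinearity facts
  have hbr₁ : ∀ x y z : X, B x (y + z) = B x y + B x z := fun x y z => by
    rw [hsymm, hbil₁, hsymm y x, hsymm z x]
  have hbr₂ : ∀ (a : ℝ) (x y : X), B x (a • y) = a * B x y := fun a x y => by
    rw [hsymm, hbil₂, hsymm]
  have hsub : ∀ x y z : X, B (x - y) z = B x z - B y z := fun x y z => by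
    rw [sub_eq_add_neg, ← neg_one_smul ℝ y, hbil₁, hbil₂]; ring
  have hsub' : ∀ x y z : X, B x (y - z) = B x y - B x z := fun x y z => by
    rw [hsymm, hsub, hsymm y x, hsymm z x]
  have hBzero : ∀ y : X, B 0 y = 0 := fun y => by
    have h := hbil₂ 0 0 y
    simpa using h
  have hnn : ∀ x : X, 0 ≤ B x x := fun x =>
    le_trans (by positivity) (hc x).1
  have hdef : ∀ x : X, B x x = 0 → x = 0 := fun x hx => by
    have h1 := (hc x).1
    rw [hx] at h1
    have h2 : ‖x‖ = 0 := by
      by_contra h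
      have hpos : 0 < ‖x‖ := (norm_nonneg x).lt_of_ne (Ne.symm h)
      have := mul_pos hc₁ (pow_pos hpos 2)
      linarith
    exact norm_eq_zero.mp h2
  -- Cauchy–Schwarz
  have hcs : ∀ x y : X, (B x y) ^ 2 ≤ B x x * B y y := by
    intro x y
    rcases eq_or_lt_of_le (hnn y) with h0 | hpos
    · have hy : y = 0 := hdef y h0.symm
      subst hy
      simp [hsymm x 0, hBzero]
    · have hexp : B (B y y • x + (-(B x y)) • y) (B y y • x + (-(B x y)) • y)
          = B y y * (B y y * B x x - B x y ^ 2) := by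
        simp only [hbil₁, hbr₁, hbil₂, hbr₂, hsymm y x]
        ring
      have hnv := hnn (B y y • x + (-(B x y)) • y)
      rw [hexp] at hnv
      nlinarith [hpos, hnv]
  have hN0 : ∀ x : X, 0 ≤ Real.sqrt (B x x) := fun x => Real.sqrt_nonneg _
  have hNsq : ∀ x : X, Real.sqrt (B x x) ^ 2 = B x x := fun x => Real.sq_sqrt (hnn x)
  -- hypotheses for maximality
  have h1 : ∀ x : X, Real.sqrt (B x x) = 0 ↔ x = 0 := by
    intro x
    constructor
    · intro h
      have : B x x = 0 := by rw [← hNsq x, h]; ring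
      exact hdef x this
    · intro h; subst h; simp [hBzero]
  have h2 : ∀ (a : ℝ) (x : X), Real.sqrt (B (a • x) (a • x)) = |a| * Real.sqrt (B x x) := by
    intro a x
    rw [hbil₂, hbr₂, ← mul_assoc, ← sq, Real.sqrt_mul (sq_nonneg a), Real.sqrt_sq_eq_abs]
  have hBle : ∀ x y : X, B x y ≤ Real.sqrt (B x x) * Real.sqrt (B y y) := by
    intro x y
    calc B x y ≤ |B x y| := le_abs_self _
      _ = Real.sqrt ((B x y) ^ 2) := (Real.sqrt_sq_eq_abs _).symm
      _ ≤ Real.sqrt (B x x * B y y) := Real.sqrt_le_sqrt (hcs x y)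
      _ = _ := Real.sqrt_mul (hnn x) _
  have h3 : ∀ x y : X, Real.sqrt (B (x + y) (x + y)) ≤ Real.sqrt (B x x) + Real.sqrt (B y y) := by
    intro x y
    have hb : B (x + y) (x + y) ≤ (Real.sqrt (B x x) + Real.sqrt (B y y)) ^ 2 := by
      have e1 : B (x + y) (x + y) = B x x + 2 * B x y + B y y := by
        rw [hbil₁, hbr₁, hbr₁, hsymm y x]; ring
      have := hBle x y
      nlinarith [hNsq x, hNsq y]
    calc Real.sqrt (B (x + y) (x + y))
        ≤ Real.sqrt ((Real.sqrt (B x x) + Real.sqrt (B y y)) ^ 2) := Real.sqrt_le_sqrt hb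
      _ = Real.sqrt (B x x) + Real.sqrt (B y y) :=
          Real.sqrt_sq (add_nonneg (hN0 x) (hN0 y))
  have h4 : ∃ d₁ d₂ : ℝ, 0 < d₁ ∧
      ∀ x : X, d₁ * ‖x‖ ≤ Real.sqrt (B x x) ∧ Real.sqrt (B x x) ≤ d₂ * ‖x‖ := by
    refine ⟨Real.sqrt c₁, Real.sqrt (max c₂ 0), Real.sqrt_pos.mpr hc₁, fun x => ⟨?_, ?_⟩⟩
    · have : Real.sqrt (c₁ * ‖x‖ ^ 2) ≤ Real.sqrt (B x x) := Real.sqrt_le_sqrt (hc x).1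
      rwa [Real.sqrt_mul hc₁.le, Real.sqrt_sq (norm_nonneg x)] at this
    · have hle : B x x ≤ max c₂ 0 * ‖x‖ ^ 2 :=
        le_trans (hc x).2 (mul_le_mul_of_nonneg_right (le_max_left c₂ 0) (sq_nonneg _))
      have : Real.sqrt (B x x) ≤ Real.sqrt (max c₂ 0 * ‖x‖ ^ 2) := Real.sqrt_le_sqrt hle
      rwa [Real.sqrt_mul (le_max_right c₂ 0), Real.sqrt_sq (norm_nonneg x)] at this
  have h5 : ∀ e : X ≃ₗ[ℝ] X, (∀ x, ‖e x‖ = ‖x‖) →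
      ∀ x, Real.sqrt (B (e x) (e x)) = Real.sqrt (B x x) := by
    intro e he x
    have := hinv ⟨e, he⟩ x x
    simpa using congrArg Real.sqrt this
  have key := hmax (fun z => Real.sqrt (B z z)) h1 h2 h3 h4 h5
  -- main claim: vectors with equal B-norm have equal ‖·‖-norm
  have hsame : ∀ x y : X, B x x = B y y → ‖x‖ = ‖y‖ := by
    intro x y hxy
    by_cases hxyeq : x = y
    · rw [hxyeq]
    obtain ⟨u, hudef⟩ : ∃ u : X, u = x - y := ⟨x - y, rfl⟩
    have hu : u ≠ 0 := hudef ▸ sub_ne_zero.mpr hxyeq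
    have huu : 0 < B u u := lt_of_le_of_ne (hnn _) (fun h => hu (hdef _ h.symm))
    have hne : B u u ≠ 0 := ne_of_gt huu
    -- reflection through the hyperplane orthogonal to u
    set f : X →ₗ[ℝ] X :=
      { toFun := fun z => z - ((2 * B z u) / (B u u)) • u
        map_add' := by
          intro a b
          show (a + b) - ((2 * B (a + b) u) / (B u u)) • u
              = (a - ((2 * B a u) / (B u u)) • u) + (b - ((2 * B b u) / (B u u)) • u)
          rw [hbil₁, show (2 * (B a u + B b u)) / (B u u)
              = (2 * B a u) / (B u u) + (2 * B b u) / (B u u) by ring, add_smul]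
          abel
        map_smul' := by
          intro m a
          show (m • a) - ((2 * B (m • a) u) / (B u u)) • u
              = m • (a - ((2 * B a u) / (B u u)) • u)
          rw [hbil₂, smul_sub, smul_smul, show 2 * (m * B a u) / (B u u)
              = m * (2 * B a u / (B u u)) by ring] } with hfdef
    have hfapp : ∀ z : X, f z = z - ((2 * B z u) / (B u u)) • u := fun z => rfl
    have hBf : ∀ z : X, B (f z) u = - B z u := by
      intro z
      rw [hfapp, hsub, hbil₂, div_mul_cancel₀ _ hne]
      ring
    have hfinv : Function.Involutive f := by
      intro z
      rw [hfapp (f z), hBf, hfapp z, show 2 * -B z u / B u u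
          = -(2 * B z u / B u u) by ring, neg_smul, sub_neg_eq_add, sub_add_cancel]
    set e : X ≃ₗ[ℝ] X := LinearEquiv.ofInvolutive f hfinv with hedef
    have heapp : ∀ z : X, e z = f z := fun z => rfl
    have hNe : ∀ z : X, Real.sqrt (B (e z) (e z)) = Real.sqrt (B z z) := by
      intro z
      have : B (f z) (f z) = B z z := by
        simp only [hfapp, hsub, hsub', hbil₂, hbr₂, hsymm u z]
        field_simp
        ring
      rw [heapp, this]
    have hex : e x = y := by
      have e1 : B u u = 2 * B x u := by
        rw [hudef]
        simp only [hsub, hsub']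
        rw [hsymm y x]
        linarith [hxy]
      rw [heapp, hfapp, e1, div_self (by rw [← e1]; exact hne), one_smul, hudef,
        sub_sub_cancel]
    have := key e hNe x
    rw [hex] at this
    exact this.symm
  -- conclude: the norm is proportional to √B
  by_cases htriv : ∀ x : X, x = 0
  · refine ⟨1, one_pos, fun x => ?_⟩
    rw [htriv x]
    simp [hBzero]
  · push_neg at htriv
    obtain ⟨x₀, hx₀⟩ := htriv
    have hBx₀ : 0 < B x₀ x₀ :=
      lt_of_le_of_ne (hnn _) (fun h => hx₀ (hdef _ h.symm))
    have hN₀ : 0 < Real.sqrt (B x₀ x₀) := Real.sqrt_pos.mpr hBx₀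
    refine ⟨‖x₀‖ / Real.sqrt (B x₀ x₀), div_pos (norm_pos_iff.mpr hx₀) hN₀, fun x => ?_⟩
    by_cases hx : x = 0
    · subst hx
      simp [hBzero]
    · have hNx : 0 < Real.sqrt (B x x) :=
        Real.sqrt_pos.mpr (lt_of_le_of_ne (hnn _) (fun h => hx (hdef _ h.symm)))
      set t : ℝ := Real.sqrt (B x₀ x₀) / Real.sqrt (B x x) with htdef
      have ht : 0 < t := div_pos hN₀ hNx
      have hBy : B (t • x) (t • x) = B x₀ x₀ := by
        rw [hbil₂, hbr₂, ← mul_assoc, ← sq, htdef, div_pow, hNsq x, hNsq x₀,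
          div_mul_cancel₀ _ (ne_of_gt (lt_of_le_of_ne (hnn x) (fun h => hx (hdef _ h.symm))))]
      have hnorm := hsame (t • x) x₀ hBy
      rw [norm_smul, Real.norm_eq_abs, abs_of_pos ht] at hnorm
      rw [htdef] at hnorm
      field_simp at hnorm ⊢
      linarith [hnorm]
end
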